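/- Let P : Cᵒᵖ → Pos be a primary doctrine, X an object of C and φ ∈ P(X). Define the endofunctor K = X×− : C → C, the natural transformations ε with ε_A = pr₂ : X×A → A and γ with γ_A = ⟨pr₁, id_{X×A}⟩ : X×A → X×(X×A), and for each object A the monotone map 𝔣_A : P(A) → P(X×A), 𝔣_A(α) = P(pr₁)(φ) ∧ P(pr₂)(α). Then: (i) (K, γ, ε) is a comonad on C (γ and ε satisfy the counit laws K(ε)∘γ = id = ε_K∘γ and the coassociativity law K(γ)∘γ = γ_K∘γ); (ii) 𝔣 is a natural transformation P ⟶ P ∘ Kᵒᵖ; (iii) for every object A and every α ∈ P(A), 𝔣_A(α) ≤ P(ε_A)(α) and 𝔣_A(α) ≤ P(γ_A)(𝔣_{X×A}(𝔣_A(α))). (That is, (P, (K,𝔣), γ, ε) is a comonad in the 2-category of indexed posets.) -/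

import Mathlib

open CategoryTheory CategoryTheory.Limits

universe w v u

/-- A primary doctrine: a functor `Cᵒᵖ → Pos` (given by the fibers `obj` together with the
monotone reindexing maps `map`) on a category `C` with finite products, such that every fiber
is an inf-semilattice with a top element and every reindexing preserves binary meets and top. -/
structure PrimaryDoctrine (C : Type u) [Category.{v} C] where
  obj : C → Type w
  [sl : ∀ A, SemilatticeInf (obj A)]
  [tp : ∀ A, OrderTop (obj A)]
  map : ∀ {A B : C}, (A ⟶ B) → obj B → obj A
  map_id : ∀ (A : C) (α : obj A), map (𝟙 A) α = α
  map_comp : ∀ {A B D : C} (f : A ⟶ B) (g : B ⟶ D) (α : obj D),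
      map (f ≫ g) α = map f (map g α)
  map_inf : ∀ {A B : C} (f : A ⟶ B) (α β : obj B), map f (α ⊓ β) = map f α ⊓ map f β
  map_top : ∀ {A B : C} (f : A ⟶ B), map f (⊤ : obj B) = ⊤

attribute [instance] PrimaryDoctrine.sl PrimaryDoctrine.tp

/-- The component at `A` of the natural transformation `𝔣 : P ⟶ P ∘ (X × -)ᵒᵖ`,
`𝔣_A(α) = P(pr₁)(φ) ⊓ P(pr₂)(α)`. -/
noncomputable def PrimaryDoctrine.frak {C : Type u} [Category.{v} C] [HasFiniteProducts C]
    (P : PrimaryDoctrine.{w} C) {X : C} (φ : P.obj X) (A : C) (α : P.obj A) :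
    P.obj (X ⨯ A) :=
  P.map prod.fst φ ⊓ P.map prod.snd α

/-- For a primary doctrine `P : Cᵒᵖ → Pos`, an object `X` of `C` and
`φ ∈ P(X)`, the endofunctor `K = X × -` together with `ε_A = pr₂`,
`γ_A = ⟨pr₁, id_{X×A}⟩` and `𝔣_A(α) = P(pr₁)(φ) ⊓ P(pr₂)(α)` constitutes a comonad
`(P, (K, 𝔣), γ, ε)` in the 2-category of indexed posets. -/
theorem comonad_on_indexed_poset {C : Type u} [Category.{v} C] [HasFiniteProducts C]
    (P : PrimaryDoctrine.{w} C) (X : C) (φ : P.obj X) :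
    -- (i) `(X × -, γ, ε)` is a comonad on `C`:
    -- naturality of `ε`
    (∀ {A B : C} (f : A ⟶ B),
      prod.map (𝟙 X) f ≫ (prod.snd : X ⨯ B ⟶ B) = (prod.snd : X ⨯ A ⟶ A) ≫ f) ∧
    -- naturality of `γ`
    (∀ {A B : C} (f : A ⟶ B),
      prod.map (𝟙 X) f ≫ prod.lift prod.fst (𝟙 (X ⨯ B))
        = prod.lift prod.fst (𝟙 (X ⨯ A)) ≫ prod.map (𝟙 X) (prod.map (𝟙 X) f)) ∧
    -- counit law `K(ε) ∘ γ = id`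
    (∀ A : C, prod.lift prod.fst (𝟙 (X ⨯ A)) ≫ prod.map (𝟙 X) prod.snd = 𝟙 (X ⨯ A)) ∧
    -- counit law `ε_K ∘ γ = id`
    (∀ A : C,
      prod.lift prod.fst (𝟙 (X ⨯ A)) ≫ (prod.snd : X ⨯ (X ⨯ A) ⟶ X ⨯ A) = 𝟙 (X ⨯ A)) ∧
    -- coassociativity `K(γ) ∘ γ = γ_K ∘ γ`
    (∀ A : C,
      prod.lift prod.fst (𝟙 (X ⨯ A)) ≫ prod.map (𝟙 X) (prod.lift prod.fst (𝟙 (X ⨯ A)))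
        = prod.lift prod.fst (𝟙 (X ⨯ A)) ≫ prod.lift prod.fst (𝟙 (X ⨯ (X ⨯ A)))) ∧
    -- (ii) `𝔣` is a natural transformation `P ⟶ P ∘ Kᵒᵖ`:
    (∀ A : C, Monotone (P.frak φ A)) ∧
    (∀ {A B : C} (f : A ⟶ B) (α : P.obj B),
      P.frak φ A (P.map f α) = P.map (prod.map (𝟙 X) f) (P.frak φ B α)) ∧
    -- (iii) `ε` and `γ` are 2-arrows:
    (∀ (A : C) (α : P.obj A), P.frak φ A α ≤ P.map (prod.snd : X ⨯ A ⟶ A) α) ∧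
    (∀ (A : C) (α : P.obj A),
      P.frak φ A α
        ≤ P.map (prod.lift prod.fst (𝟙 (X ⨯ A))) (P.frak φ (X ⨯ A) (P.frak φ A α))) := by

  refine ⟨?_, ?_, ?_, ?_, ?_, ?_, ?_, ?_, ?_⟩
  · intro A B f; simp
  · intro A B f; ext <;> simp
  · intro A; ext <;> simp
  · intro A; exact prod.lift_snd _ _
  · intro A; simp; congr 1; exact (prod.lift_fst _ _).symm
  · intro A α β h
    refine inf_le_inf le_rfl ?_
    have : P.map (prod.snd : X ⨯ A ⟶ A) α = P.map prod.snd α ⊓ P.map prod.snd β := by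
      rw [← P.map_inf, inf_eq_left.2 h]
    rw [this]; exact inf_le_right
  · intro A B f α
    simp only [PrimaryDoctrine.frak, P.map_inf, ← P.map_comp, prod.map_fst, prod.map_snd,
      Category.comp_id]
  · intro A α; exact inf_le_right
  · intro A α
    simp only [PrimaryDoctrine.frak, P.map_inf, ← P.map_comp, ← Category.assoc,
      prod.lift_fst, prod.lift_snd, Category.id_comp, P.map_id]
    exact le_inf inf_le_left le_rfl
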